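/- arXiv:1406.5764 — 4 statements merged into one kernel-verified Lean document; each statement's English description precedes it below -/
import Mathlib

section
/- Let T > 0, x ∈ ℝ^d, and let b : ℝ^d → ℝ^d be Lipschitz continuous. Then the Freidlin–Wentzell rate functional I_T^x is lower semicontinuous on C([0,T]; ℝ^d) equipped with the supremum metric: for every sequence φ_n → φ uniformly on [0,T], liminf_{n→∞} I_T^x(φ_n) ≥ I_T^x(φ). -/
open MeasureTheory Filter

/-- The Freidlin–Wentzell rate functional `I_T^x` on paths `φ : ℝ → ℝ^d`
(only the values of `φ` on `[0,T]` are relevant).  It equals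
`(1/2) ∫₀^T ‖φ̇(s) − b(φ(s))‖² ds` if `φ(0) = x` and `φ` is in `H¹`
(i.e. `φ` is the integral of a square-integrable function `g = φ̇` on `[0,T]`),
and `∞` otherwise (the infimum of the empty set in `ℝ≥0∞` is `∞`;
since `φ̇` is a.e. unique, the set below is a singleton when nonempty). -/
noncomputable def FWrate (d : ℕ) (b : EuclideanSpace ℝ (Fin d) → EuclideanSpace ℝ (Fin d))
    (T : ℝ) (x : EuclideanSpace ℝ (Fin d)) (φ : ℝ → EuclideanSpace ℝ (Fin d)) : ENNReal :=
  sInf {c : ENNReal | ∃ g : ℝ → EuclideanSpace ℝ (Fin d),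
    MeasureTheory.IntegrableOn g (Set.Icc 0 T) ∧
    MeasureTheory.IntegrableOn (fun s => ‖g s‖ ^ 2) (Set.Icc 0 T) ∧
    (∀ t ∈ Set.Icc (0 : ℝ) T, φ t = φ 0 + ∫ s in (0 : ℝ)..t, g s) ∧
    φ 0 = x ∧
    c = ENNReal.ofReal ((1 / 2) * ∫ s in (0 : ℝ)..T, ‖g s - b (φ s)‖ ^ 2)}

section Aux

open scoped RealInnerProductSpace

variable {α : Type*} {m : MeasurableSpace α} {μ : Measure α}
variable {F : Type*} [NormedAddCommGroup F] [InnerProductSpace ℝ F]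

/-- The squared `L²` norm as an integral of the pointwise squared norm. -/
lemma FW.norm_sq_L2 (G : Lp F 2 μ) (f : α → F) (hf : ⇑G =ᵐ[μ] f) :
    (‖G‖ : ℝ) ^ 2 = ∫ a, ‖f a‖ ^ 2 ∂μ := by
  have h1 : ⟪G, G⟫ = ∫ a, ⟪G a, G a⟫ ∂μ := L2.inner_def G G
  have h2 : (∫ a, ⟪G a, G a⟫ ∂μ) = ∫ a, ‖f a‖ ^ 2 ∂μ := by
    refine integral_congr_ae ?_
    filter_upwards [hf] with a ha
    rw [ha, real_inner_self_eq_norm_sq]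
  rw [← real_inner_self_eq_norm_sq, h1, h2]

/-- A function continuous on `[0,T]` is in `L²` of the restricted volume. -/
lemma FW.memLp_of_continuousOn {F : Type*} [NormedAddCommGroup F] {T : ℝ} {f : ℝ → F}
    (hf : ContinuousOn f (Set.Icc 0 T)) :
    MemLp f 2 ((volume : Measure ℝ).restrict (Set.Icc 0 T)) := by
  obtain ⟨Cb, hCb⟩ := isCompact_Icc.exists_bound_of_continuousOn hf
  refine MemLp.of_bound (hf.aestronglyMeasurable measurableSet_Icc) Cb ?_
  exact (ae_restrict_iff' measurableSet_Icc).mpr (ae_of_all _ hCb)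


end Aux

set_option maxHeartbeats 3200000 in
/-- The Freidlin–Wentzell rate functional is lower semicontinuous on
`C([0,T]; ℝ^d)` with the supremum metric: if `φₙ → φ` uniformly on `[0,T]`,
then `liminf I_T^x(φₙ) ≥ I_T^x(φ)`. -/
theorem fw_rate_lowerSemicontinuous
    (d : ℕ) (T : ℝ) (hT : 0 < T) (x : EuclideanSpace ℝ (Fin d))
    (b : EuclideanSpace ℝ (Fin d) → EuclideanSpace ℝ (Fin d))
    (K : NNReal) (hb : LipschitzWith K b)
    (φ : ℝ → EuclideanSpace ℝ (Fin d)) (φn : ℕ → ℝ → EuclideanSpace ℝ (Fin d))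
    (hφ : ContinuousOn φ (Set.Icc 0 T)) (hφn : ∀ n, ContinuousOn (φn n) (Set.Icc 0 T))
    (hconv : TendstoUniformlyOn φn φ Filter.atTop (Set.Icc 0 T)) :
    FWrate d b T x φ ≤ Filter.liminf (fun n => FWrate d b T x (φn n)) Filter.atTop := by
  classical
  set L := Filter.liminf (fun n => FWrate d b T x (φn n)) Filter.atTop with hL
  refine ENNReal.le_of_forall_pos_le_add fun ε hε hLtop => ?_
  have hne : L + ε ≠ ⊤ := by
    exact ENNReal.add_ne_top.mpr ⟨hLtop.ne, ENNReal.coe_ne_top⟩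
  have hlt : L < L + ε :=
    ENNReal.lt_add_right hLtop.ne (by exact_mod_cast hε.ne')
  have hfreq : ∃ᶠ n in atTop, FWrate d b T x (φn n) < L + ε :=
    frequently_lt_of_liminf_lt (by isBoundedDefault) hlt
  obtain ⟨u, hu_mono, hu_lt⟩ := Filter.extraction_of_frequently_atTop hfreq
  -- witnesses for the subsequence
  have hwit : ∀ k, ∃ g : ℝ → EuclideanSpace ℝ (Fin d),
      MeasureTheory.IntegrableOn g (Set.Icc 0 T) ∧
      MeasureTheory.IntegrableOn (fun s => ‖g s‖ ^ 2) (Set.Icc 0 T) ∧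
      (∀ t ∈ Set.Icc (0 : ℝ) T, φn (u k) t = φn (u k) 0 + ∫ s in (0 : ℝ)..t, g s) ∧
      φn (u k) 0 = x ∧
      ENNReal.ofReal ((1 / 2) * ∫ s in (0 : ℝ)..T, ‖g s - b (φn (u k) s)‖ ^ 2) < L + ε := by
    intro k
    have h := hu_lt k
    rw [FWrate] at h
    obtain ⟨c, hc, hclt⟩ := sInf_lt_iff.mp h
    obtain ⟨g, h1, h2, h3, h4, h5⟩ := hc
    exact ⟨g, h1, h2, h3, h4, h5 ▸ hclt⟩
  choose g hg_int hg_sq hg_path hg_x hg_val using hwit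
  -- the initial point
  have h0T : (0 : ℝ) ∈ Set.Icc (0 : ℝ) T := Set.mem_Icc.mpr ⟨le_refl 0, hT.le⟩
  have hTT : T ∈ Set.Icc (0 : ℝ) T := Set.mem_Icc.mpr ⟨hT.le, le_refl T⟩
  have hptconv : ∀ t ∈ Set.Icc (0 : ℝ) T,
      Tendsto (fun k => φn (u k) t) atTop (nhds (φ t)) := fun t ht =>
    (hconv.tendsto_at ht).comp hu_mono.tendsto_atTop
  have hx0 : φ 0 = x := by
    have h1 := hptconv 0 h0T
    have h2 : (fun k => φn (u k) 0) = fun _ => x := funext fun k => hg_x k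
    rw [h2] at h1
    exact (tendsto_const_nhds_iff.mp h1).symm
  -- the measure and the L² space
  set μ := (volume : Measure ℝ).restrict (Set.Icc 0 T) with hμdef
  haveI : IsFiniteMeasure μ := by
    constructor
    rw [hμdef, Measure.restrict_apply_univ]
    exact measure_Icc_lt_top
  -- the drift terms
  have hbφn_cont : ∀ k, ContinuousOn (fun s => b (φn (u k) s)) (Set.Icc 0 T) := fun k =>
    hb.continuous.comp_continuousOn (hφn (u k))
  have hbφ_cont : ContinuousOn (fun s => b (φ s)) (Set.Icc 0 T) :=
    hb.continuous.comp_continuousOn hφ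
  have hbφn_mem : ∀ k, MemLp (fun s => b (φn (u k) s)) 2 μ := fun k =>
    FW.memLp_of_continuousOn (hbφn_cont k)
  have hbφ_mem : MemLp (fun s => b (φ s)) 2 μ :=
    FW.memLp_of_continuousOn hbφ_cont
  have hg_mem : ∀ k, MemLp (g k) 2 μ := fun k =>
    (memLp_two_iff_integrable_sq_norm (hg_int k).aestronglyMeasurable).mpr (hg_sq k)
  -- the L² elements
  set h : ℕ → ℝ → EuclideanSpace ℝ (Fin d) := fun k s => g k s - b (φn (u k) s) with hhdef
  have hh_mem : ∀ k, MemLp (h k) 2 μ := fun k => (hg_mem k).sub (hbφn_mem k)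
  set H : ℕ → Lp (EuclideanSpace ℝ (Fin d)) 2 μ := fun k => (hh_mem k).toLp (h k) with hHdef
  -- norm bound
  set R : ℝ := (L + ε).toReal with hRdef
  have hR0 : 0 ≤ R := ENNReal.toReal_nonneg
  set C : ℝ := Real.sqrt (2 * R) with hCdef
  have hC0 : 0 ≤ C := Real.sqrt_nonneg _
  have hμint : ∀ f : ℝ → ℝ, (∫ s, f s ∂μ) = ∫ s in (0 : ℝ)..T, f s := by
    intro f
    rw [intervalIntegral.integral_of_le hT.le, hμdef]
    exact integral_Icc_eq_integral_Ioc
  have hHnormsq : ∀ k, (‖H k‖ : ℝ) ^ 2 = ∫ s in (0 : ℝ)..T, ‖h k s‖ ^ 2 := by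
    intro k
    rw [FW.norm_sq_L2 (H k) (h k) ((hh_mem k).coeFn_toLp)]
    exact hμint _
  have hint_nonneg : ∀ k, 0 ≤ (1 / 2 : ℝ) * ∫ s in (0 : ℝ)..T, ‖g k s - b (φn (u k) s)‖ ^ 2 := by
    intro k
    have : 0 ≤ ∫ s in (0 : ℝ)..T, ‖g k s - b (φn (u k) s)‖ ^ 2 :=
      intervalIntegral.integral_nonneg hT.le (fun s _ => sq_nonneg _)
    linarith
  have hval_lt : ∀ k, (1 / 2 : ℝ) * (∫ s in (0 : ℝ)..T, ‖h k s‖ ^ 2) < R := by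
    intro k
    have := (ENNReal.ofReal_lt_iff_lt_toReal (hint_nonneg k) hne).mp (hg_val k)
    exact this
  have hHnorm : ∀ k, ‖H k‖ ≤ C := by
    intro k
    have h1 : (‖H k‖ : ℝ) ^ 2 ≤ 2 * R := by
      rw [hHnormsq k]
      nlinarith [hval_lt k]
    calc ‖H k‖ = Real.sqrt (‖H k‖ ^ 2) := (Real.sqrt_sq (norm_nonneg _)).symm
      _ ≤ Real.sqrt (2 * R) := Real.sqrt_le_sqrt h1
      _ = C := rfl
  -- the shifted paths
  set ψ : ℝ → EuclideanSpace ℝ (Fin d) := fun t => φ t - φ 0 - ∫ s in (0 : ℝ)..t, b (φ s) with hψdef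
  set ψn : ℕ → ℝ → EuclideanSpace ℝ (Fin d) := fun k t =>
    φn (u k) t - φn (u k) 0 - ∫ s in (0 : ℝ)..t, b (φn (u k) s) with hψndef
  -- integral of h over subintervals
  have hg_ii : ∀ k (a' b' : ℝ), 0 ≤ a' → b' ≤ T → a' ≤ b' →
      IntervalIntegrable (g k) volume a' b' := by
    intro k a' b' h1 h2 h3
    refine IntegrableOn.intervalIntegrable ?_
    rw [Set.uIcc_of_le h3]
    exact (hg_int k).mono_set (Set.Icc_subset_Icc h1 h2)
  have hbφn_ii : ∀ k (a' b' : ℝ), 0 ≤ a' → b' ≤ T → a' ≤ b' →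
      IntervalIntegrable (fun s => b (φn (u k) s)) volume a' b' := by
    intro k a' b' h1 h2 h3
    refine ContinuousOn.intervalIntegrable ?_
    rw [Set.uIcc_of_le h3]
    exact (hbφn_cont k).mono (Set.Icc_subset_Icc h1 h2)
  have hHint : ∀ k, ∀ a' b' : ℝ, 0 ≤ a' → a' ≤ b' → b' ≤ T →
      (∫ s in Set.Ioc a' b', h k s ∂μ) = ψn k b' - ψn k a' := by
    intro k a' b' ha0 hab hbT
    have ha'T : a' ≤ T := hab.trans hbT
    have hb'0 : 0 ≤ b' := ha0.trans hab
    have hsub : Set.Ioc a' b' ⊆ Set.Icc 0 T :=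
      Set.Ioc_subset_Icc_self.trans (Set.Icc_subset_Icc ha0 hbT)
    have e0 : (∫ s in Set.Ioc a' b', h k s ∂μ) = ∫ s in a'..b', h k s := by
      rw [hμdef, Measure.restrict_restrict measurableSet_Ioc,
        Set.inter_eq_self_of_subset_left hsub, intervalIntegral.integral_of_le hab]
    have e1 : (∫ s in a'..b', h k s) =
        (∫ s in a'..b', g k s) - ∫ s in a'..b', b (φn (u k) s) :=
      intervalIntegral.integral_sub (hg_ii k a' b' ha0 hbT hab) (hbφn_ii k a' b' ha0 hbT hab)
    have e2 : (∫ s in a'..b', g k s) =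
        (∫ s in (0:ℝ)..b', g k s) - ∫ s in (0:ℝ)..a', g k s :=
      (intervalIntegral.integral_interval_sub_left (hg_ii k 0 b' le_rfl hbT hb'0)
        (hg_ii k 0 a' le_rfl ha'T ha0)).symm
    have e3 : (∫ s in a'..b', b (φn (u k) s)) =
        (∫ s in (0:ℝ)..b', b (φn (u k) s)) - ∫ s in (0:ℝ)..a', b (φn (u k) s) :=
      (intervalIntegral.integral_interval_sub_left (hbφn_ii k 0 b' le_rfl hbT hb'0)
        (hbφn_ii k 0 a' le_rfl ha'T ha0)).symm
    have e4 := hg_path k b' (Set.mem_Icc.mpr ⟨hb'0, hbT⟩)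
    have e5 := hg_path k a' (Set.mem_Icc.mpr ⟨ha0, ha'T⟩)
    have e6 : (∫ s in (0:ℝ)..b', g k s) = φn (u k) b' - φn (u k) 0 := by
      rw [e4]; abel
    have e7 : (∫ s in (0:ℝ)..a', g k s) = φn (u k) a' - φn (u k) 0 := by
      rw [e5]; abel
    rw [e0, e1, e2, e3, e6, e7, hψndef]
    beta_reduce
    abel
  -- convergence of the shifted paths
  have hIconv : ∀ t ∈ Set.Icc (0 : ℝ) T,
      Tendsto (fun k => ∫ s in (0:ℝ)..t, b (φn (u k) s)) atTop
        (nhds (∫ s in (0:ℝ)..t, b (φ s))) := by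
    intro t ht
    obtain ⟨ht0, htT⟩ := Set.mem_Icc.mp ht
    rw [Metric.tendsto_atTop]
    intro δ hδ
    set δ' : ℝ := δ / ((K : ℝ) * T + 1) with hδ'def
    have hKT : (0:ℝ) < (K : ℝ) * T + 1 := by positivity
    have hδ' : 0 < δ' := div_pos hδ hKT
    have := (Metric.tendstoUniformlyOn_iff.mp hconv) δ' hδ'
    obtain ⟨N, hN⟩ := Filter.eventually_atTop.mp this
    refine ⟨N, fun k hk => ?_⟩
    have huk : N ≤ u k := hk.trans (hu_mono.le_apply)
    have hbnd : ∀ s ∈ Set.Icc (0:ℝ) T, ‖b (φn (u k) s) - b (φ s)‖ ≤ (K : ℝ) * δ' := by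
      intro s hs
      have h1 : dist (b (φn (u k) s)) (b (φ s)) ≤ (K : ℝ) * dist (φn (u k) s) (φ s) :=
        hb.dist_le_mul _ _
      have h2 : dist (φ s) (φn (u k) s) < δ' := hN (u k) huk s hs
      rw [dist_eq_norm] at h1
      rw [dist_comm] at h2
      calc ‖b (φn (u k) s) - b (φ s)‖ ≤ (K : ℝ) * dist (φn (u k) s) (φ s) := h1
        _ ≤ (K : ℝ) * δ' := by
            exact mul_le_mul_of_nonneg_left h2.le (K.coe_nonneg)
    have hii1 : IntervalIntegrable (fun s => b (φn (u k) s)) volume 0 t := by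
      refine ContinuousOn.intervalIntegrable ?_
      rw [Set.uIcc_of_le ht0]
      exact (hbφn_cont k).mono (Set.Icc_subset_Icc le_rfl htT)
    have hii2 : IntervalIntegrable (fun s => b (φ s)) volume 0 t := by
      refine ContinuousOn.intervalIntegrable ?_
      rw [Set.uIcc_of_le ht0]
      exact hbφ_cont.mono (Set.Icc_subset_Icc le_rfl htT)
    rw [dist_eq_norm, ← intervalIntegral.integral_sub hii1 hii2]
    have hb2 : ∀ s ∈ Set.uIoc (0:ℝ) t, ‖b (φn (u k) s) - b (φ s)‖ ≤ (K : ℝ) * δ' := by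
      intro s hs
      rw [Set.uIoc_of_le ht0] at hs
      exact hbnd s (Set.Ioc_subset_Icc_self.trans (Set.Icc_subset_Icc le_rfl htT) hs)
    calc ‖∫ s in (0:ℝ)..t, (b (φn (u k) s) - b (φ s))‖
        ≤ (K : ℝ) * δ' * |t - 0| := intervalIntegral.norm_integral_le_of_norm_le_const hb2
      _ ≤ (K : ℝ) * δ' * T := by
          rw [sub_zero, abs_of_nonneg ht0]
          exact mul_le_mul_of_nonneg_left htT (by positivity)
      _ < δ := by
          rw [hδ'def]
          rw [div_eq_inv_mul]
          have h3 : (K : ℝ) * ((K : ℝ) * T + 1)⁻¹ * T < 1 := by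
            rw [mul_comm ((K:ℝ)) (((K : ℝ) * T + 1)⁻¹), mul_assoc, inv_mul_lt_one₀ hKT]
            nlinarith [K.coe_nonneg, hT]
          calc (K : ℝ) * (((K : ℝ) * T + 1)⁻¹ * δ) * T
              = ((K : ℝ) * ((K : ℝ) * T + 1)⁻¹ * T) * δ := by ring
            _ < 1 * δ := by exact mul_lt_mul_of_pos_right h3 hδ
            _ = δ := one_mul δ
  have hψconv : ∀ t ∈ Set.Icc (0 : ℝ) T,
      Tendsto (fun k => ψn k t) atTop (nhds (ψ t)) := by
    intro t ht
    simp only [hψndef, hψdef]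
    exact ((hptconv t ht).sub (hptconv 0 h0T)).sub (hIconv t ht)
  -- the generator set of indicator functions
  have hfinIoc : ∀ a' b' : ℝ, μ (Set.Ioc a' b') ≠ ⊤ := fun a' b' => measure_ne_top μ _
  set Sgen : Set (Lp (EuclideanSpace ℝ (Fin d)) 2 μ) :=
    {f | ∃ (a' b' : ℝ) (c : EuclideanSpace ℝ (Fin d)),
      0 ≤ a' ∧ a' ≤ b' ∧ b' ≤ T ∧
      f = indicatorConstLp 2 measurableSet_Ioc (hfinIoc a' b') c} with hSgendef
  -- convergence of inner products against generators
  have hgenconv : ∀ (a' b' : ℝ) (c : EuclideanSpace ℝ (Fin d)),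
      0 ≤ a' → a' ≤ b' → b' ≤ T →
      Tendsto (fun k =>
          (inner ℝ (H k) (indicatorConstLp 2 measurableSet_Ioc (hfinIoc a' b') c) : ℝ))
        atTop (nhds (inner ℝ c (ψ b' - ψ a') : ℝ)) := by
    intro a' b' c h1 h2 h3
    have hcoe : ∀ k,
        (inner ℝ (H k) (indicatorConstLp 2 measurableSet_Ioc (hfinIoc a' b') c) : ℝ)
          = inner ℝ c (ψn k b' - ψn k a') := by
      intro k
      rw [real_inner_comm,
        L2.inner_indicatorConstLp_eq_inner_setIntegral ℝ measurableSet_Ioc (hfinIoc a' b') c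
          (H k)]
      congr 1
      rw [← hHint k a' b' h1 h2 h3]
      refine setIntegral_congr_ae measurableSet_Ioc ?_
      filter_upwards [(hh_mem k).coeFn_toLp] with s hs _
      exact hs
    simp_rw [hcoe]
    exact Filter.Tendsto.inner tendsto_const_nhds
      ((hψconv b' (Set.mem_Icc.mpr ⟨h1.trans h2, h3⟩)).sub
        (hψconv a' (Set.mem_Icc.mpr ⟨h1, h2.trans h3⟩)))
  -- convergence on the span of the generators
  have hspan : ∀ f ∈ Submodule.span ℝ Sgen,
      ∃ l : ℝ, Tendsto (fun k => (inner ℝ (H k) f : ℝ)) atTop (nhds l) := by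
    intro f hf
    induction hf using Submodule.span_induction with
    | mem f hfm =>
        obtain ⟨a', b', c, h1, h2, h3, rfl⟩ := hfm
        exact ⟨_, hgenconv a' b' c h1 h2 h3⟩
    | zero =>
        refine ⟨0, ?_⟩
        simpa using (tendsto_const_nhds : Tendsto (fun _ : ℕ => (0 : ℝ)) atTop (nhds 0))
    | add f f' hfm hfm' ih ih' =>
        obtain ⟨l, hl⟩ := ih
        obtain ⟨l', hl'⟩ := ih'
        exact ⟨l + l', by simpa [inner_add_right] using hl.add hl'⟩
    | smul a f hfm ih =>
        obtain ⟨l, hl⟩ := ih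
        exact ⟨a * l, by simpa [real_inner_smul_right] using hl.const_mul a⟩
  -- the closed subspace
  set SS : Submodule ℝ (Lp (EuclideanSpace ℝ (Fin d)) 2 μ) :=
    (Submodule.span ℝ Sgen).topologicalClosure with hSSdef
  have hmemconv : ∀ f ∈ SS,
      ∃ l : ℝ, Tendsto (fun k => (inner ℝ (H k) f : ℝ)) atTop (nhds l) := by
    intro f hf
    have hf' : f ∈ closure (Submodule.span ℝ Sgen : Set (Lp (EuclideanSpace ℝ (Fin d)) 2 μ)) := by
      rw [← Submodule.topologicalClosure_coe]
      exact hf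
    have hcauchy : CauchySeq (fun k => (inner ℝ (H k) f : ℝ)) := by
      rw [Metric.cauchySeq_iff]
      intro δ hδ
      obtain ⟨f', hf'mem, hdist⟩ :=
        Metric.mem_closure_iff.mp hf' (δ / (4 * (C + 1))) (div_pos hδ (by nlinarith [hC0]))
      obtain ⟨l, hl⟩ := hspan f' hf'mem
      obtain ⟨N, hN⟩ := Metric.cauchySeq_iff.mp hl.cauchySeq (δ / 4) (by positivity)
      refine ⟨N, fun m hm n hn => ?_⟩
      have hkey : ∀ k, |(inner ℝ (H k) f : ℝ) - inner ℝ (H k) f'| ≤ δ / 4 := by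
        intro k
        rw [← inner_sub_right]
        have hstep : C * (δ / (4 * (C + 1))) ≤ δ / 4 := by
          have h1 : (0:ℝ) < 4 * (C + 1) := by nlinarith [hC0]
          rw [← mul_div_assoc, div_le_div_iff₀ h1 (by norm_num : (0:ℝ) < 4)]
          nlinarith [hC0, hδ.le]
        calc |(inner ℝ (H k) (f - f') : ℝ)| ≤ ‖H k‖ * ‖f - f'‖ := abs_real_inner_le_norm _ _
          _ ≤ C * ‖f - f'‖ := mul_le_mul_of_nonneg_right (hHnorm k) (norm_nonneg _)
          _ ≤ C * (δ / (4 * (C + 1))) := by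
              refine mul_le_mul_of_nonneg_left ?_ hC0
              rw [← dist_eq_norm]
              exact hdist.le
          _ ≤ δ / 4 := hstep
      have h3 := hN m hm n hn
      rw [Real.dist_eq] at h3 ⊢
      have hsplit : (inner ℝ (H m) f : ℝ) - inner ℝ (H n) f =
          ((inner ℝ (H m) f : ℝ) - inner ℝ (H m) f') + ((inner ℝ (H m) f' : ℝ) - inner ℝ (H n) f')
            + ((inner ℝ (H n) f' : ℝ) - inner ℝ (H n) f) := by ring
      rw [hsplit]
      have habs := abs_add_three ((inner ℝ (H m) f : ℝ) - inner ℝ (H m) f')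
        ((inner ℝ (H m) f' : ℝ) - inner ℝ (H n) f') ((inner ℝ (H n) f' : ℝ) - inner ℝ (H n) f)
      have h4 := hkey m
      have h5 : |(inner ℝ (H n) f' : ℝ) - inner ℝ (H n) f| ≤ δ / 4 := by
        rw [abs_sub_comm]
        exact hkey n
      calc |(inner ℝ (H m) f : ℝ) - inner ℝ (H m) f' + ((inner ℝ (H m) f' : ℝ) - inner ℝ (H n) f')
            + ((inner ℝ (H n) f' : ℝ) - inner ℝ (H n) f)| ≤ _ := habs
        _ < δ := by linarith
    exact cauchySeq_tendsto_of_complete hcauchy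
  choose ℓval hℓval using hmemconv
  -- the limiting functional
  have hℓadd : ∀ (f f' : Lp (EuclideanSpace ℝ (Fin d)) 2 μ) (hf : f ∈ SS) (hf' : f' ∈ SS),
      ℓval (f + f') (SS.add_mem hf hf') = ℓval f hf + ℓval f' hf' := by
    intro f f' hf hf'
    refine tendsto_nhds_unique (hℓval (f + f') (SS.add_mem hf hf')) ?_
    simpa [inner_add_right] using (hℓval f hf).add (hℓval f' hf')
  have hℓsmul : ∀ (a : ℝ) (f : Lp (EuclideanSpace ℝ (Fin d)) 2 μ) (hf : f ∈ SS),
      ℓval (a • f) (SS.smul_mem a hf) = a * ℓval f hf := by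
    intro a f hf
    refine tendsto_nhds_unique (hℓval (a • f) (SS.smul_mem a hf)) ?_
    simpa [real_inner_smul_right] using (hℓval f hf).const_mul a
  have hℓirrel : ∀ (f : Lp (EuclideanSpace ℝ (Fin d)) 2 μ) (hf hf' : f ∈ SS),
      ℓval f hf = ℓval f hf' := fun f hf hf' =>
    tendsto_nhds_unique (hℓval f hf) (hℓval f hf')
  let ℓlin : SS →ₗ[ℝ] ℝ :=
    { toFun := fun f => ℓval f.1 f.2
      map_add' := by
        intro f f'
        have := hℓadd f.1 f'.1 f.2 f'.2
        rw [← this]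
        exact hℓirrel _ _ _
      map_smul' := by
        intro a f
        have := hℓsmul a f.1 f.2
        simp only [RingHom.id_apply, smul_eq_mul]
        rw [← this]
        exact hℓirrel _ _ _ }
  have hbound : ∀ f : SS, ‖ℓlin f‖ ≤ C * ‖f‖ := by
    intro f
    rw [Real.norm_eq_abs]
    have habs : Tendsto (fun k => |(inner ℝ (H k) f.1 : ℝ)|) atTop
        (nhds |ℓval f.1 f.2|) := (hℓval f.1 f.2).abs
    refine le_of_tendsto habs (Filter.Eventually.of_forall fun k => ?_)
    calc |(inner ℝ (H k) f.1 : ℝ)| ≤ ‖H k‖ * ‖f.1‖ := abs_real_inner_le_norm _ _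
      _ ≤ C * ‖f.1‖ := mul_le_mul_of_nonneg_right (hHnorm k) (norm_nonneg _)
  let ℓ : SS →L[ℝ] ℝ := LinearMap.mkContinuous ℓlin C hbound
  haveI : CompleteSpace SS := (Submodule.isClosed_topologicalClosure _).completeSpace_coe
  let HH : SS := (InnerProductSpace.toDual ℝ SS).symm ℓ
  have hHHnorm : ‖HH‖ ≤ C := by
    have h1 : ‖HH‖ = ‖ℓ‖ := LinearIsometryEquiv.norm_map (InnerProductSpace.toDual ℝ SS).symm ℓ
    rw [h1]
    exact LinearMap.mkContinuous_norm_le ℓlin hC0 hbound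
  have hHHinner : ∀ f : SS, (inner ℝ HH f : ℝ) = ℓval f.1 f.2 := by
    intro f
    rw [InnerProductSpace.toDual_symm_apply]
    show (LinearMap.mkContinuous ℓlin C hbound) f = _
    rw [LinearMap.mkContinuous_apply]
    exact hℓirrel _ _ _
  set hlf : ℝ → EuclideanSpace ℝ (Fin d) := ⇑(HH : Lp (EuclideanSpace ℝ (Fin d)) 2 μ) with hhlfdef
  have hlfmem : MemLp hlf 2 μ := Lp.memLp _
  -- the limit path identity
  have hψeq : ∀ t, 0 ≤ t → t ≤ T → ψ t = ∫ s in Set.Ioc 0 t, hlf s ∂μ := by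
    intro t ht0 htT
    have hψ0 : ψ 0 = 0 := by
      simp [hψdef]
    refine ext_inner_left ℝ fun c => ?_
    have hmem : indicatorConstLp 2 measurableSet_Ioc (hfinIoc 0 t) c ∈ SS :=
      Submodule.le_topologicalClosure _
        (Submodule.subset_span ⟨0, t, c, le_rfl, ht0, htT, rfl⟩)
    have e1 := hgenconv 0 t c le_rfl ht0 htT
    have e3 : ℓval _ hmem = inner ℝ c (ψ t - ψ 0) :=
      tendsto_nhds_unique (hℓval _ hmem) e1
    have e4 : (inner ℝ (HH : Lp (EuclideanSpace ℝ (Fin d)) 2 μ)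
        (indicatorConstLp 2 measurableSet_Ioc (hfinIoc 0 t) c) : ℝ) = inner ℝ c (ψ t - ψ 0) := by
      have := hHHinner ⟨_, hmem⟩
      rw [e3] at this
      exact this
    have e6 : (inner ℝ (HH : Lp (EuclideanSpace ℝ (Fin d)) 2 μ)
        (indicatorConstLp 2 measurableSet_Ioc (hfinIoc 0 t) c) : ℝ)
          = inner ℝ c (∫ s in Set.Ioc 0 t, hlf s ∂μ) := by
      rw [real_inner_comm]
      exact L2.inner_indicatorConstLp_eq_inner_setIntegral ℝ measurableSet_Ioc (hfinIoc 0 t) c _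
    rw [hψ0, sub_zero] at e4
    rw [← e4, e6]
  -- the candidate derivative for the limit path
  set gfin : ℝ → EuclideanSpace ℝ (Fin d) := fun s => hlf s + b (φ s) with hgfindef
  have hgfin_mem : MemLp gfin 2 μ := hlfmem.add hbφ_mem
  have hgfin_int : MeasureTheory.IntegrableOn gfin (Set.Icc 0 T) :=
    hgfin_mem.integrable (by norm_num)
  have hgfin_sq : MeasureTheory.IntegrableOn (fun s => ‖gfin s‖ ^ 2) (Set.Icc 0 T) :=
    (memLp_two_iff_integrable_sq_norm hgfin_mem.aestronglyMeasurable).mp hgfin_mem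
  have hlfint : Integrable hlf μ := hlfmem.integrable (by norm_num)
  have hlfii : ∀ t, 0 ≤ t → t ≤ T → IntervalIntegrable hlf volume 0 t := by
    intro t h1 h2
    refine IntegrableOn.intervalIntegrable ?_
    rw [Set.uIcc_of_le h1]
    exact (show MeasureTheory.IntegrableOn hlf (Set.Icc 0 T) volume from hlfint).mono_set
      (Set.Icc_subset_Icc le_rfl h2)
  have hpath : ∀ t ∈ Set.Icc (0 : ℝ) T, φ t = φ 0 + ∫ s in (0 : ℝ)..t, gfin s := by
    intro t ht
    obtain ⟨ht0, htT⟩ := Set.mem_Icc.mp ht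
    have hii2 : IntervalIntegrable (fun s => b (φ s)) volume 0 t := by
      refine ContinuousOn.intervalIntegrable ?_
      rw [Set.uIcc_of_le ht0]
      exact hbφ_cont.mono (Set.Icc_subset_Icc le_rfl htT)
    have e1 : (∫ s in (0 : ℝ)..t, gfin s)
        = (∫ s in (0 : ℝ)..t, hlf s) + ∫ s in (0 : ℝ)..t, b (φ s) :=
      intervalIntegral.integral_add (hlfii t ht0 htT) hii2
    have hsub : Set.Ioc (0:ℝ) t ⊆ Set.Icc 0 T :=
      Set.Ioc_subset_Icc_self.trans (Set.Icc_subset_Icc le_rfl htT)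
    have e2 : (∫ s in (0 : ℝ)..t, hlf s) = ∫ s in Set.Ioc 0 t, hlf s ∂μ := by
      rw [intervalIntegral.integral_of_le ht0, hμdef,
        Measure.restrict_restrict measurableSet_Ioc, Set.inter_eq_self_of_subset_left hsub]
    rw [e1, e2, ← hψeq t ht0 htT]
    simp only [hψdef]
    abel
  -- the value bound
  have hnormsqHH : (‖HH‖ : ℝ) ^ 2 = ∫ s in (0 : ℝ)..T, ‖hlf s‖ ^ 2 := by
    have h1 : ‖HH‖ = ‖(HH : Lp (EuclideanSpace ℝ (Fin d)) 2 μ)‖ := rfl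
    rw [h1, FW.norm_sq_L2 (HH : Lp (EuclideanSpace ℝ (Fin d)) 2 μ) hlf Filter.EventuallyEq.rfl]
    exact hμint _
  have hCsq : C ^ 2 = 2 * R := Real.sq_sqrt (by positivity)
  have hval : (1 / 2 : ℝ) * (∫ s in (0 : ℝ)..T, ‖gfin s - b (φ s)‖ ^ 2) ≤ R := by
    have heq : (fun s => ‖gfin s - b (φ s)‖ ^ 2) = fun s => ‖hlf s‖ ^ 2 := by
      funext s
      simp [hgfindef]
    rw [intervalIntegral.integral_congr (fun s _ => congrFun heq s), ← hnormsqHH]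
    nlinarith [hHHnorm, norm_nonneg HH, hCsq, hC0]
  have hfinal : FWrate d b T x φ
      ≤ ENNReal.ofReal ((1 / 2) * ∫ s in (0 : ℝ)..T, ‖gfin s - b (φ s)‖ ^ 2) := by
    rw [FWrate]
    exact sInf_le ⟨gfin, hgfin_int, hgfin_sq, hpath, hx0, rfl⟩
  refine hfinal.trans ?_
  calc ENNReal.ofReal ((1 / 2) * ∫ s in (0 : ℝ)..T, ‖gfin s - b (φ s)‖ ^ 2)
      ≤ ENNReal.ofReal R := ENNReal.ofReal_le_ofReal hval
    _ = L + ε := ENNReal.ofReal_toReal hne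
end

section
/- Let U : ℝ^d → ℝ be continuous, convex, and coercive. Then the family of Gibbs probability measures (μ_ε)_{0 < ε ≤ 1} is tight: for every δ > 0 there exists a compact set K ⊆ ℝ^d such that μ_ε(ℝ^d \ K) ≤ δ for all ε ∈ (0, 1]. -/
open MeasureTheory Filter
open scoped ENNReal

/-- The Gibbs measure `μ_ε` on `ℝ^d` with density
`x ↦ Z_ε⁻¹ exp(−U(x)/ε²)` with respect to Lebesgue measure. -/
noncomputable def gibbs (d : ℕ) (U : EuclideanSpace ℝ (Fin d) → ℝ) (ε : ℝ) :
    Measure (EuclideanSpace ℝ (Fin d)) :=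
  (∫⁻ x, ENNReal.ofReal (Real.exp (-U x / ε ^ 2)))⁻¹ •
    MeasureTheory.volume.withDensity (fun x => ENNReal.ofReal (Real.exp (-U x / ε ^ 2)))

set_option maxHeartbeats 1000000 in
/-- For `U : ℝ^d → ℝ` continuous, convex and coercive, the family of Gibbs
measures `(μ_ε)_{0 < ε ≤ 1}` is tight: for every `δ > 0` there is a compact set
`K ⊆ ℝ^d` with `μ_ε(ℝ^d \ K) ≤ δ` for all `ε ∈ (0,1]`. -/
theorem gibbs_tight
    (d : ℕ) (U : EuclideanSpace ℝ (Fin d) → ℝ)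
    (hUc : Continuous U) (hUconv : ConvexOn ℝ Set.univ U)
    (hUcoer : Filter.Tendsto U (Bornology.cobounded (EuclideanSpace ℝ (Fin d))) Filter.atTop) :
    ∀ δ : ℝ, 0 < δ → ∃ K : Set (EuclideanSpace ℝ (Fin d)), IsCompact K ∧
      ∀ ε ∈ Set.Ioc (0 : ℝ) 1, gibbs d U ε Kᶜ ≤ ENNReal.ofReal δ := by
  intro δ hδ
  -- a global minimizer
  have hcoer' : Tendsto U (cocompact _) atTop := by
    rwa [← Metric.cobounded_eq_cocompact]
  obtain ⟨x₀, hx₀⟩ := hUc.exists_forall_le hcoer'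
  set m := U x₀ with hm
  -- sublevel sets are bounded
  have hsub : ∀ c : ℝ, Bornology.IsBounded {x | U x ≤ c} := by
    intro c
    have h1 : ∀ᶠ x in Bornology.cobounded _, c < U x :=
      hUcoer.eventually (eventually_gt_atTop c)
    have h2 : Bornology.IsBounded {x | c < U x}ᶜ := Bornology.IsCobounded.compl h1
    refine h2.subset ?_
    intro x hx
    simp only [Set.mem_compl_iff, Set.mem_setOf_eq, not_lt]
    exact hx
  -- sublevel sets are compact
  have hcpt : ∀ c : ℝ, IsCompact {x | U x ≤ c} := fun c =>
    Metric.isCompact_of_isClosed_isBounded (isClosed_le hUc continuous_const) (hsub c)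
  -- positive, finite volume of a neighborhood of the minimum
  set v : ℝ≥0∞ := volume {x | U x < m + 1} with hv
  have hv0 : 0 < v := by
    refine (isOpen_lt hUc continuous_const).measure_pos volume ⟨x₀, ?_⟩
    simp only [Set.mem_setOf_eq]; linarith
  have hvtop : v < ⊤ := by
    exact (measure_mono (Set.setOf_subset_setOf.mpr fun x => le_of_lt)).trans_lt
      (hsub (m + 1)).measure_lt_top
  -- a radius b > 0 outside of which U exceeds m + 1
  obtain ⟨b₀, hb₀⟩ := (hsub (m + 1)).subset_closedBall x₀
  set b : ℝ := max (b₀ + 1) 1 with hbdef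
  have hb1 : (1 : ℝ) ≤ b := le_max_right _ _
  have hbpos : (0 : ℝ) < b := lt_of_lt_of_le one_pos hb1
  have hbout : ∀ x : EuclideanSpace ℝ (Fin d), b ≤ ‖x - x₀‖ → m + 1 < U x := by
    intro x hx
    by_contra h
    push_neg at h
    have : x ∈ Metric.closedBall x₀ b₀ := hb₀ h
    rw [Metric.mem_closedBall, dist_eq_norm] at this
    have : b ≤ b₀ := le_trans hx this
    have : b₀ + 1 ≤ b := le_max_left _ _
    linarith
  -- linear growth of U outside the ball of radius b
  have hgrow : ∀ x : EuclideanSpace ℝ (Fin d), b ≤ ‖x - x₀‖ →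
      m + ‖x - x₀‖ / b ≤ U x := by
    intro x hx
    set r : ℝ := ‖x - x₀‖ with hr
    have hrpos : 0 < r := lt_of_lt_of_le hbpos hx
    set t : ℝ := b / r with ht
    have ht0 : 0 < t := div_pos hbpos hrpos
    have ht1 : t ≤ 1 := (div_le_one hrpos).2 hx
    set y : EuclideanSpace ℝ (Fin d) := x₀ + t • (x - x₀) with hy
    have hyx : ‖y - x₀‖ = b := by
      have : y - x₀ = t • (x - x₀) := by rw [hy]; abel
      rw [this, norm_smul, Real.norm_eq_abs, abs_of_pos ht0, ht]
      field_simp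
      exact hr.symm
    have hyU : m + 1 < U y := hbout y (le_of_eq hyx.symm)
    have hconv := hUconv.2 (Set.mem_univ x₀) (Set.mem_univ x)
      (by linarith : (0:ℝ) ≤ 1 - t) (le_of_lt ht0) (by ring)
    have hyeq : (1 - t) • x₀ + t • x = y := by
      rw [hy]; module
    rw [hyeq] at hconv
    have h1 : m + 1 < (1 - t) * m + t * U x := lt_of_lt_of_le hyU hconv
    have h2 : 1 < t * (U x - m) := by nlinarith
    have h3 : 1 / t ≤ U x - m := by
      rw [div_le_iff₀ ht0]; nlinarith
    have h4 : (1 : ℝ) / t = r / b := by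
      rw [ht]; field_simp
    linarith [h4 ▸ h3]
  -- finiteness of ∫ exp(-(U - m)/2)
  set C₂ : ℝ≥0∞ := ∫⁻ x, ENNReal.ofReal (Real.exp (-(U x - m) / 2)) with hC₂
  have hC₂top : C₂ < ⊤ := by
    set n : ℝ := (d : ℝ) + 1 with hn
    have hnpos : 0 < n := by positivity
    set c : ℝ := 1 / (2 * b) with hc
    have hcpos : 0 < c := by positivity
    set A : ℝ := max 1 (n / c) with hA
    have hA1 : (1 : ℝ) ≤ A := le_max_left _ _
    -- pointwise: exp(-(U x - m)/2) ≤ e^(1/2) * A^n * (1+‖x-x₀‖)^(-n)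
    have hpt : ∀ x : EuclideanSpace ℝ (Fin d),
        Real.exp (-(U x - m) / 2) ≤
          (Real.exp (1/2) * A ^ n) * (1 + ‖x - x₀‖) ^ (-n) := by
      intro x
      set r : ℝ := ‖x - x₀‖ with hr
      have hr0 : 0 ≤ r := norm_nonneg _
      -- first: exp(-(U x - m)/2) ≤ exp(1/2) * exp(-c*r)
      have h1 : Real.exp (-(U x - m) / 2) ≤ Real.exp (1/2) * Real.exp (-(c * r)) := by
        rw [← Real.exp_add]
        apply Real.exp_le_exp.2
        by_cases hcase : b ≤ r
        · have := hgrow x hcase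
          have hrb : r / b = 2 * (c * r) := by rw [hc]; field_simp
          nlinarith
        · push_neg at hcase
          have hUm : m ≤ U x := hx₀ x
          have : c * r ≤ 1/2 := by
            rw [hc]
            rw [div_mul_eq_mul_div, mul_comm]
            rw [div_le_div_iff₀ (by positivity) (by norm_num)]
            nlinarith
          linarith
      -- second: exp(-c*r) ≤ A^n * (1+r)^(-n)
      have h2 : Real.exp (-(c * r)) ≤ A ^ n * (1 + r) ^ (-n) := by
        have hbase : 1 + r ≤ A * Real.exp (c * r / n) := by
          have he : 1 + c * r / n ≤ Real.exp (c * r / n) := by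
            have := Real.add_one_le_exp (c * r / n)
            linarith
          have hkey : 1 + r ≤ A * (1 + c * r / n) := by
            rcases le_total (n / c) 1 with hnc | hnc
            · have hAe : A = 1 := max_eq_left hnc
              have : n ≤ c := by
                rw [div_le_one hcpos] at hnc; exact hnc
              rw [hAe, one_mul]
              have : r ≤ c * r / n := by
                rw [le_div_iff₀ hnpos]; nlinarith
              linarith
            · have hAe : A = n / c := max_eq_right hnc
              rw [hAe]
              have hne : (n / c) * (1 + c * r / n) = n / c + r := by
                field_simp
              rw [hne]; linarith
          calc 1 + r ≤ A * (1 + c * r / n) := hkey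
            _ ≤ A * Real.exp (c * r / n) := by
                apply mul_le_mul_of_nonneg_left he (by linarith)
        have hpow : (1 + r) ^ n ≤ A ^ n * Real.exp (c * r) := by
          have h1r : (0:ℝ) ≤ 1 + r := by linarith
          have := Real.rpow_le_rpow h1r hbase (le_of_lt hnpos)
          calc (1 + r) ^ n ≤ (A * Real.exp (c * r / n)) ^ n := this
            _ = A ^ n * (Real.exp (c * r / n)) ^ n := by
                rw [Real.mul_rpow (by linarith) (Real.exp_nonneg _)]
            _ = A ^ n * Real.exp (c * r) := by
                rw [← Real.exp_mul]
                congr 2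
                field_simp
        rw [Real.rpow_neg (by linarith), ← div_eq_mul_inv, le_div_iff₀ (by positivity)]
        calc Real.exp (-(c * r)) * (1 + r) ^ n
            ≤ Real.exp (-(c * r)) * (A ^ n * Real.exp (c * r)) := by
              apply mul_le_mul_of_nonneg_left hpow (Real.exp_nonneg _)
          _ = A ^ n := by
              rw [← mul_assoc, mul_comm (Real.exp _), mul_assoc, ← Real.exp_add]
              simp
      calc Real.exp (-(U x - m) / 2)
          ≤ Real.exp (1/2) * Real.exp (-(c * r)) := h1
        _ ≤ Real.exp (1/2) * (A ^ n * (1 + r) ^ (-n)) := by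
            apply mul_le_mul_of_nonneg_left h2 (Real.exp_nonneg _)
        _ = (Real.exp (1/2) * A ^ n) * (1 + r) ^ (-n) := by ring
    -- conclude finiteness
    have hfin : (∫⁻ x : EuclideanSpace ℝ (Fin d),
        ENNReal.ofReal ((1 + ‖x - x₀‖) ^ (-n))) < ⊤ := by
      have heq : (∫⁻ x : EuclideanSpace ℝ (Fin d),
          ENNReal.ofReal ((1 + ‖x - x₀‖) ^ (-n)))
          = ∫⁻ x : EuclideanSpace ℝ (Fin d), ENNReal.ofReal ((1 + ‖x‖) ^ (-n)) := by
        have := lintegral_add_right_eq_self (μ := volume)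
          (fun x : EuclideanSpace ℝ (Fin d) => ENNReal.ofReal ((1 + ‖x‖) ^ (-n))) (-x₀)
        simpa [sub_eq_add_neg] using this
      rw [heq]
      apply finite_integral_one_add_norm
      rw [finrank_euclideanSpace_fin]
      simp [hn]
    calc C₂ ≤ ∫⁻ x, ENNReal.ofReal ((Real.exp (1/2) * A ^ n) * (1 + ‖x - x₀‖) ^ (-n)) := by
          apply lintegral_mono
          intro x
          exact ENNReal.ofReal_le_ofReal (hpt x)
      _ = ∫⁻ x, ENNReal.ofReal (Real.exp (1/2) * A ^ n)
            * ENNReal.ofReal ((1 + ‖x - x₀‖) ^ (-n)) := by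
          congr 1; funext x
          rw [ENNReal.ofReal_mul (by positivity)]
      _ = ENNReal.ofReal (Real.exp (1/2) * A ^ n)
            * ∫⁻ x, ENNReal.ofReal ((1 + ‖x - x₀‖) ^ (-n)) :=
          lintegral_const_mul' _ _ ENNReal.ofReal_ne_top
      _ < ⊤ := ENNReal.mul_lt_top ENNReal.ofReal_lt_top hfin
  -- choose R
  have hvreal : 0 < v.toReal := ENNReal.toReal_pos hv0.ne' hvtop.ne
  set c2 : ℝ := C₂.toReal with hc2
  have hc2nn : 0 ≤ c2 := ENNReal.toReal_nonneg
  set R : ℝ := max 1 (2 * (1 - Real.log (δ * v.toReal / (c2 + 1)))) with hRdef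
  have hR1 : (1 : ℝ) ≤ R := le_max_left _ _
  have hRexp : Real.exp (1 - R / 2) * c2 ≤ δ * v.toReal := by
    have hq : 0 < δ * v.toReal / (c2 + 1) := by positivity
    have h1 : 1 - R / 2 ≤ Real.log (δ * v.toReal / (c2 + 1)) := by
      have : 2 * (1 - Real.log (δ * v.toReal / (c2 + 1))) ≤ R := le_max_right _ _
      linarith
    have h2 : Real.exp (1 - R / 2) ≤ δ * v.toReal / (c2 + 1) := by
      calc Real.exp (1 - R / 2) ≤ Real.exp (Real.log (δ * v.toReal / (c2 + 1))) :=
            Real.exp_le_exp.2 h1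
        _ = δ * v.toReal / (c2 + 1) := Real.exp_log hq
    calc Real.exp (1 - R / 2) * c2 ≤ (δ * v.toReal / (c2 + 1)) * c2 := by
          apply mul_le_mul_of_nonneg_right h2 hc2nn
      _ ≤ δ * v.toReal := by
          rw [div_mul_eq_mul_div, div_le_iff₀ (by positivity)]
          nlinarith
  have hRle : ENNReal.ofReal (Real.exp (1 - R / 2)) * C₂ ≤ ENNReal.ofReal δ * v := by
    have hC₂eq : C₂ = ENNReal.ofReal c2 := by
      rw [hc2, ENNReal.ofReal_toReal hC₂top.ne]
    have hveq : v = ENNReal.ofReal v.toReal := (ENNReal.ofReal_toReal hvtop.ne).symm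
    rw [hC₂eq, ← ENNReal.ofReal_mul (Real.exp_nonneg _)]
    calc ENNReal.ofReal (Real.exp (1 - R / 2) * c2) ≤ ENNReal.ofReal (δ * v.toReal) :=
          ENNReal.ofReal_le_ofReal hRexp
      _ = ENNReal.ofReal δ * ENNReal.ofReal v.toReal := ENNReal.ofReal_mul hδ.le
      _ = ENNReal.ofReal δ * v := by rw [← hveq]
  -- the compact set
  refine ⟨{x | U x ≤ m + R}, hcpt (m + R), ?_⟩
  rintro ε ⟨hε0, hε1⟩
  have hε2 : 0 < ε ^ 2 := by positivity
  have hs1 : 1 ≤ (ε ^ 2)⁻¹ := by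
    rw [le_inv_comm₀ one_pos hε2]
    nlinarith
  set f : EuclideanSpace ℝ (Fin d) → ℝ≥0∞ :=
    fun x => ENNReal.ofReal (Real.exp (-U x / ε ^ 2)) with hf
  have hfmeas : Measurable f :=
    (ENNReal.continuous_ofReal.comp (Real.continuous_exp.comp (hUc.neg.div_const _))).measurable
  set Z : ℝ≥0∞ := ∫⁻ x, f x with hZ
  set E₁ : ℝ≥0∞ := ENNReal.ofReal (Real.exp (-(m + 1) / ε ^ 2)) with hE₁
  -- lower bound on Z
  have hZlb : E₁ * v ≤ Z := by
    calc E₁ * v = ∫⁻ _ in {x | U x < m + 1}, E₁ := (setLIntegral_const _ _).symm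
      _ ≤ ∫⁻ x in {x | U x < m + 1}, f x := by
          apply setLIntegral_mono' (isOpen_lt hUc continuous_const).measurableSet
          intro x hx
          apply ENNReal.ofReal_le_ofReal
          apply Real.exp_le_exp.2
          have hxlt : U x < m + 1 := hx
          gcongr
      _ ≤ Z := setLIntegral_le_lintegral _ _
  have hZ0 : Z ≠ 0 := by
    refine ne_of_gt (lt_of_lt_of_le ?_ hZlb)
    apply ENNReal.mul_pos
    · exact (ENNReal.ofReal_pos.2 (Real.exp_pos _)).ne'
    · exact hv0.ne'
  -- upper bound on the numerator
  set a : ℝ := Real.exp (-(m + 1) / ε ^ 2) * Real.exp (1 - R / 2) with ha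
  have hNub : (∫⁻ x in {x | U x ≤ m + R}ᶜ, f x)
      ≤ E₁ * (ENNReal.ofReal (Real.exp (1 - R / 2)) * C₂) := by
    have hptN : ∀ x ∈ {x | U x ≤ m + R}ᶜ,
        f x ≤ ENNReal.ofReal (a * Real.exp (-(U x - m) / 2)) := by
      intro x hx
      simp only [Set.mem_compl_iff, Set.mem_setOf_eq, not_le] at hx
      apply ENNReal.ofReal_le_ofReal
      rw [ha, mul_assoc ]
      rw [← Real.exp_add, ← Real.exp_add]
      apply Real.exp_le_exp.2
      have hW : R ≤ U x - m := by linarith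
      set s : ℝ := (ε ^ 2)⁻¹ with hsdef
      have hdiv : ∀ q : ℝ, q / ε ^ 2 = q * s := fun q => div_eq_mul_inv q _
      rw [hdiv, hdiv]
      nlinarith [mul_nonneg (sub_nonneg.2 hW) (by linarith : (0:ℝ) ≤ s - 1/2),
        mul_nonneg (by linarith : (0:ℝ) ≤ R - 1) (by linarith : (0:ℝ) ≤ s - 1)]
    calc (∫⁻ x in {x | U x ≤ m + R}ᶜ, f x)
        ≤ ∫⁻ x in {x | U x ≤ m + R}ᶜ, ENNReal.ofReal (a * Real.exp (-(U x - m) / 2)) :=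
          setLIntegral_mono' (isClosed_le hUc continuous_const).measurableSet.compl hptN
      _ ≤ ∫⁻ x, ENNReal.ofReal (a * Real.exp (-(U x - m) / 2)) :=
          setLIntegral_le_lintegral _ _
      _ = ∫⁻ x, ENNReal.ofReal a * ENNReal.ofReal (Real.exp (-(U x - m) / 2)) := by
          congr 1; funext x
          rw [ENNReal.ofReal_mul (by positivity)]
      _ = ENNReal.ofReal a * C₂ := lintegral_const_mul' _ _ ENNReal.ofReal_ne_top
      _ = E₁ * (ENNReal.ofReal (Real.exp (1 - R / 2)) * C₂) := by
          rw [ha, ENNReal.ofReal_mul (Real.exp_nonneg _), hE₁, mul_assoc]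
  -- conclude
  have hmain : (∫⁻ x in {x | U x ≤ m + R}ᶜ, f x) ≤ ENNReal.ofReal δ * Z := by
    calc (∫⁻ x in {x | U x ≤ m + R}ᶜ, f x)
        ≤ E₁ * (ENNReal.ofReal (Real.exp (1 - R / 2)) * C₂) := hNub
      _ ≤ E₁ * (ENNReal.ofReal δ * v) := mul_le_mul_right hRle _
      _ = ENNReal.ofReal δ * (E₁ * v) := by rw [← mul_assoc, mul_comm E₁, mul_assoc]
      _ ≤ ENNReal.ofReal δ * Z := mul_le_mul_right hZlb _
  have happly : gibbs d U ε {x | U x ≤ m + R}ᶜ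
      = Z⁻¹ * ∫⁻ x in {x | U x ≤ m + R}ᶜ, f x := by
    rw [gibbs, Measure.smul_apply, smul_eq_mul,
      withDensity_apply _ (isClosed_le hUc continuous_const).measurableSet.compl]
  rw [happly]
  by_cases hZtop : Z = ⊤
  · rw [hZtop]; simp
  calc Z⁻¹ * ∫⁻ x in {x | U x ≤ m + R}ᶜ, f x
      ≤ Z⁻¹ * (ENNReal.ofReal δ * Z) := mul_le_mul_right hmain _
    _ = ENNReal.ofReal δ * (Z⁻¹ * Z) := by rw [← mul_assoc, mul_comm Z⁻¹, mul_assoc]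
    _ = ENNReal.ofReal δ := by rw [ENNReal.inv_mul_cancel hZ0 hZtop, mul_one]
end

section
/- Let U : ℝ^d → ℝ be continuous, convex, and coercive, let (ε_n)_{n ∈ ℕ} be a sequence of positive reals with ε_n → 0, and suppose the Gibbs measures μ_{ε_n} converge weakly to a probability measure μ on ℝ^d. Then μ is concentrated on the set of global minimizers of U: μ(U_*) = 1, where U_* = {x : U(x) = inf_{y} U(y)}. -/
open MeasureTheory Filter
open scoped ENNReal Topology

section Aux

variable {d : ℕ} {U : EuclideanSpace ℝ (Fin d) → ℝ}

lemma gibbs_dens_meas (hUc : Continuous U) (e : ℝ) :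
    Measurable fun x : EuclideanSpace ℝ (Fin d) =>
      ENNReal.ofReal (Real.exp (-U x / e ^ 2)) :=
  ((hUc.neg.div_const _).rexp.measurable).ennreal_ofReal

lemma gibbs_Z_pos (hUc : Continuous U) (e : ℝ) :
    0 < ∫⁻ x : EuclideanSpace ℝ (Fin d), ENNReal.ofReal (Real.exp (-U x / e ^ 2)) := by
  rw [lintegral_pos_iff_support (gibbs_dens_meas hUc e)]
  have : (Function.support fun x : EuclideanSpace ℝ (Fin d) =>
      ENNReal.ofReal (Real.exp (-U x / e ^ 2))) = Set.univ := by
    apply Set.eq_univ_of_forall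
    intro x
    simp only [Function.mem_support]
    exact (ENNReal.ofReal_pos.2 (Real.exp_pos _)).ne'
  rw [this]
  exact isOpen_univ.measure_pos volume Set.univ_nonempty

lemma gibbs_apply (e : ℝ) {S : Set (EuclideanSpace ℝ (Fin d))} (hS : MeasurableSet S) :
    gibbs d U e S =
      (∫⁻ x, ENNReal.ofReal (Real.exp (-U x / e ^ 2)))⁻¹ *
        ∫⁻ x in S, ENNReal.ofReal (Real.exp (-U x / e ^ 2)) := by
  rw [gibbs, Measure.smul_apply, withDensity_apply _ hS, smul_eq_mul]

lemma gibbs_isProb (hUc : Continuous U) (e : ℝ)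
    (hZ : (∫⁻ x, ENNReal.ofReal (Real.exp (-U x / e ^ 2))) ≠ ⊤) :
    IsProbabilityMeasure (gibbs d U e) := by
  constructor
  rw [gibbs_apply e MeasurableSet.univ, Measure.restrict_univ]
  exact ENNReal.inv_mul_cancel (gibbs_Z_pos hUc e).ne' hZ

lemma gibbs_tail_bound (hUc : Continuous U)
    {x₀ : EuclideanSpace ℝ (Fin d)} (hx₀ : ∀ y, U x₀ ≤ U y)
    {ε₀ e δ : ℝ} (hε₀ : 0 < ε₀) (he : 0 < e) (hee : e ≤ ε₀) (hδ : 0 < δ) :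
    gibbs d U e {x | U x₀ + δ < U x} ≤
      ((volume ({x | U x < U x₀ + δ/2} ∩ Metric.ball x₀ 1))⁻¹ *
        (∫⁻ x, ENNReal.ofReal (Real.exp (-U x / ε₀ ^ 2)))) *
        ENNReal.ofReal (Real.exp ((U x₀ + δ)/ε₀^2 - (δ/2)/e^2)) := by
  set m := U x₀ with hm
  set S : Set (EuclideanSpace ℝ (Fin d)) := {x | m + δ < U x} with hS
  have hSmeas : MeasurableSet S := (isOpen_lt continuous_const hUc).measurableSet
  set A : Set (EuclideanSpace ℝ (Fin d)) :=
    {x | U x < m + δ/2} ∩ Metric.ball x₀ 1 with hA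
  have hAmeas : MeasurableSet A :=
    ((isOpen_lt hUc continuous_const).inter Metric.isOpen_ball).measurableSet
  set c : ℝ := (m + δ)/ε₀^2 - (m + δ)/e^2 with hc
  set Z₀ : ℝ≥0∞ := ∫⁻ x, ENNReal.ofReal (Real.exp (-U x / ε₀ ^ 2)) with hZ₀
  have he2 : (0:ℝ) < e^2 := by positivity
  have hee2 : e^2 ≤ ε₀^2 := by nlinarith
  -- numerator bound
  have hNup : (∫⁻ x in S, ENNReal.ofReal (Real.exp (-U x / e ^ 2))) ≤
      ENNReal.ofReal (Real.exp c) * Z₀ := by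
    calc (∫⁻ x in S, ENNReal.ofReal (Real.exp (-U x / e ^ 2)))
        ≤ ∫⁻ x in S, ENNReal.ofReal (Real.exp c) *
            ENNReal.ofReal (Real.exp (-U x / ε₀ ^ 2)) := by
          apply setLIntegral_mono (measurable_const.mul (gibbs_dens_meas hUc ε₀))
          intro x hx
          rw [Pi.mul_apply, ← ENNReal.ofReal_mul (Real.exp_pos _).le, ← Real.exp_add]
          apply ENNReal.ofReal_le_ofReal
          apply Real.exp_le_exp.2
          have hx' : m + δ < U x := hx
          have key : (U x - (m + δ))/ε₀^2 ≤ (U x - (m + δ))/e^2 := by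
            apply div_le_div_of_nonneg_left (by linarith) he2 hee2
          rw [sub_div, sub_div] at key
          rw [hc, neg_div, neg_div]
          linarith
      _ ≤ ∫⁻ x, ENNReal.ofReal (Real.exp c) *
            ENNReal.ofReal (Real.exp (-U x / ε₀ ^ 2)) := setLIntegral_le_lintegral _ _
      _ = ENNReal.ofReal (Real.exp c) * Z₀ :=
          lintegral_const_mul _ (gibbs_dens_meas hUc ε₀)
  -- denominator bound
  have hZlow : ENNReal.ofReal (Real.exp (-(m + δ/2)/e^2)) * volume A ≤
      ∫⁻ x, ENNReal.ofReal (Real.exp (-U x / e ^ 2)) := by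
    calc ENNReal.ofReal (Real.exp (-(m + δ/2)/e^2)) * volume A
        = ∫⁻ _ in A, ENNReal.ofReal (Real.exp (-(m + δ/2)/e^2)) :=
          (setLIntegral_const A _).symm
      _ ≤ ∫⁻ x in A, ENNReal.ofReal (Real.exp (-U x / e ^ 2)) := by
          apply setLIntegral_mono (gibbs_dens_meas hUc e)
          intro x hx
          apply ENNReal.ofReal_le_ofReal
          apply Real.exp_le_exp.2
          have hx' : U x < m + δ/2 := hx.1
          exact (div_le_div_iff_of_pos_right he2).2 (by linarith)
      _ ≤ ∫⁻ x, ENNReal.ofReal (Real.exp (-U x / e ^ 2)) := setLIntegral_le_lintegral _ _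
  -- combine
  rw [gibbs_apply e hSmeas]
  calc (∫⁻ x, ENNReal.ofReal (Real.exp (-U x / e ^ 2)))⁻¹ *
        ∫⁻ x in S, ENNReal.ofReal (Real.exp (-U x / e ^ 2))
      ≤ (ENNReal.ofReal (Real.exp (-(m + δ/2)/e^2)) * volume A)⁻¹ *
        (ENNReal.ofReal (Real.exp c) * Z₀) :=
        mul_le_mul' (ENNReal.inv_le_inv.2 hZlow) hNup
    _ = ((volume A)⁻¹ * Z₀) * ENNReal.ofReal (Real.exp ((m + δ)/ε₀^2 - (δ/2)/e^2)) := by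
        rw [ENNReal.mul_inv (Or.inl (ENNReal.ofReal_pos.2 (Real.exp_pos _)).ne') (Or.inl ENNReal.ofReal_ne_top),
          ← ENNReal.ofReal_inv_of_pos (Real.exp_pos _), ← Real.exp_neg]
        have h2 : ENNReal.ofReal (Real.exp (-(-(m + δ/2)/e^2))) *
            ENNReal.ofReal (Real.exp c) =
            ENNReal.ofReal (Real.exp ((m + δ)/ε₀^2 - δ/2/e^2)) := by
          rw [← ENNReal.ofReal_mul (Real.exp_pos _).le, ← Real.exp_add]
          congr 1
          rw [hc]; ring
        calc ENNReal.ofReal (Real.exp (-(-(m + δ/2)/e^2))) * (volume A)⁻¹ *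
              (ENNReal.ofReal (Real.exp c) * Z₀)
            = (volume A)⁻¹ * Z₀ * (ENNReal.ofReal (Real.exp (-(-(m + δ/2)/e^2))) *
              ENNReal.ofReal (Real.exp c)) := by ring
          _ = _ := by rw [h2]

lemma gibbs_tail_tendsto (hUc : Continuous U)
    {x₀ : EuclideanSpace ℝ (Fin d)} (hx₀ : ∀ y, U x₀ ≤ U y)
    {ε₀ : ℝ} (hε₀ : 0 < ε₀)
    (hZ₀ : (∫⁻ x, ENNReal.ofReal (Real.exp (-U x / ε₀ ^ 2))) ≠ ⊤)
    {ε : ℕ → ℝ} (hεpos : ∀ n, 0 < ε n) (hε0 : Tendsto ε atTop (nhds 0))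
    {δ : ℝ} (hδ : 0 < δ) :
    Tendsto (fun n => gibbs d U (ε n) {x | U x₀ + δ < U x}) atTop (nhds 0) := by
  set A : Set (EuclideanSpace ℝ (Fin d)) :=
    {x | U x < U x₀ + δ/2} ∩ Metric.ball x₀ 1 with hA
  have hAopen : IsOpen A := (isOpen_lt hUc continuous_const).inter Metric.isOpen_ball
  have hAne : A.Nonempty :=
    ⟨x₀, ⟨by simp only [Set.mem_setOf_eq]; linarith, Metric.mem_ball_self one_pos⟩⟩
  have hApos : 0 < volume A := hAopen.measure_pos volume hAne
  set K : ℝ≥0∞ := (volume A)⁻¹ *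
    ∫⁻ x, ENNReal.ofReal (Real.exp (-U x / ε₀ ^ 2)) with hK
  have hKne : K ≠ ⊤ := ENNReal.mul_ne_top (ENNReal.inv_ne_top.2 hApos.ne') hZ₀
  have h2 : Tendsto (fun n => (ε n)^2) atTop (nhdsWithin 0 (Set.Ioi 0)) := by
    apply tendsto_nhdsWithin_of_tendsto_nhds_of_eventually_within
    · simpa using hε0.pow 2
    · exact Eventually.of_forall fun n => pow_pos (hεpos n) 2
  have h1 : Tendsto (fun n => (δ/2) * ((ε n)^2)⁻¹) atTop atTop :=
    (tendsto_inv_nhdsGT_zero.comp h2).const_mul_atTop (half_pos hδ)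
  have hbot : Tendsto (fun n => (U x₀ + δ)/ε₀^2 - (δ/2)/(ε n)^2) atTop atBot := by
    apply tendsto_atBot_add_const_left _ _ (tendsto_neg_atTop_atBot.comp ?_)
    · exact h1.congr fun n => (div_eq_mul_inv _ _).symm
  have hexp : Tendsto
      (fun n => ENNReal.ofReal (Real.exp ((U x₀ + δ)/ε₀^2 - (δ/2)/(ε n)^2)))
      atTop (nhds 0) := by
    have := (ENNReal.continuous_ofReal.tendsto 0).comp (Real.tendsto_exp_atBot.comp hbot)
    simpa [Function.comp_def] using this
  have hup : Tendsto (fun n => K *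
      ENNReal.ofReal (Real.exp ((U x₀ + δ)/ε₀^2 - (δ/2)/(ε n)^2))) atTop (nhds 0) := by
    have := ENNReal.Tendsto.const_mul hexp (Or.inr hKne)
    simpa using this
  apply tendsto_of_tendsto_of_tendsto_of_le_of_le' tendsto_const_nhds hup
  · exact Eventually.of_forall fun n => zero_le
  · filter_upwards [hε0.eventually_le_const hε₀] with n hn
    exact gibbs_tail_bound hUc hx₀ hε₀ (hεpos n) hn hδ

end Aux

/-- If `U : ℝ^d → ℝ` is continuous, convex and coercive, `εₙ → 0` with
`εₙ > 0`, and the Gibbs measures `μ_{εₙ}` converge weakly (i.e. integrals of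
every bounded continuous function converge) to a probability measure `μ`, then
`μ` concentrates on the set `U_*` of global minimizers of `U`: `μ(U_*) = 1`. -/
theorem gibbs_weak_limit_concentrates_on_minimizers
    (d : ℕ) (U : EuclideanSpace ℝ (Fin d) → ℝ)
    (hUc : Continuous U) (hUconv : ConvexOn ℝ Set.univ U)
    (hUcoer : Filter.Tendsto U (Bornology.cobounded (EuclideanSpace ℝ (Fin d))) Filter.atTop)
    (ε : ℕ → ℝ) (hεpos : ∀ n, 0 < ε n) (hε0 : Filter.Tendsto ε Filter.atTop (nhds 0))
    (μ : Measure (EuclideanSpace ℝ (Fin d))) (hμ : IsProbabilityMeasure μ)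
    (hweak : ∀ f : BoundedContinuousFunction (EuclideanSpace ℝ (Fin d)) ℝ,
      Filter.Tendsto (fun n => ∫ x, f x ∂(gibbs d U (ε n))) Filter.atTop
        (nhds (∫ x, f x ∂μ))) :
    μ {x : EuclideanSpace ℝ (Fin d) | ∀ y, U x ≤ U y} = 1 := by
  obtain ⟨x₀, hx₀⟩ : ∃ x₀, ∀ y, U x₀ ≤ U y :=
    hUc.exists_forall_le (by rwa [Metric.cobounded_eq_cocompact] at hUcoer)
  set m : ℝ := U x₀ with hm
  -- eventually the partition function is finite
  have hone : Tendsto (fun n => ∫ x, (1 : BoundedContinuousFunction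
      (EuclideanSpace ℝ (Fin d)) ℝ) x ∂(gibbs d U (ε n))) atTop (𝓝 1) := by
    have h := hweak 1
    have : (∫ x, (1 : BoundedContinuousFunction (EuclideanSpace ℝ (Fin d)) ℝ) x ∂μ) = 1 := by
      simp
    rwa [this] at h
  have hZfin : ∀ᶠ n in atTop,
      (∫⁻ x, ENNReal.ofReal (Real.exp (-U x / (ε n) ^ 2))) ≠ ⊤ := by
    filter_upwards [hone.eventually_const_lt (by norm_num : (1:ℝ)/2 < 1)] with n hn hZ
    have h0 : gibbs d U (ε n) = 0 := by
      rw [gibbs, hZ]; simp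
    rw [h0] at hn
    simp at hn
    linarith
  obtain ⟨n₀, hn₀⟩ := hZfin.exists
  -- key claim
  have key : ∀ δ : ℝ, 0 < δ → μ {x | m + δ < U x} = 0 := by
    intro δ hδ
    -- the bump function
    have hcont : Continuous fun x : EuclideanSpace ℝ (Fin d) =>
        min 1 (max 0 ((m + δ - U x) * (2/δ))) :=
      continuous_const.min (continuous_const.max ((continuous_const.sub hUc).mul
        continuous_const))
    have hf0 : ∀ x : EuclideanSpace ℝ (Fin d),
        0 ≤ min 1 (max 0 ((m + δ - U x) * (2/δ))) :=
      fun x => le_min zero_le_one (le_max_left _ _)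
    have hf1 : ∀ x : EuclideanSpace ℝ (Fin d),
        min 1 (max 0 ((m + δ - U x) * (2/δ))) ≤ 1 := fun x => min_le_left _ _
    set fb : BoundedContinuousFunction (EuclideanSpace ℝ (Fin d)) ℝ :=
      ⟨⟨fun x => min 1 (max 0 ((m + δ - U x) * (2/δ))), hcont⟩, 1, fun x y => by
        rw [Real.dist_eq, abs_sub_le_iff]
        constructor <;> [skip; skip] <;>
          · have := hf0 x; have := hf1 x; have := hf0 y; have := hf1 y
            simp only [ContinuousMap.coe_mk]
            linarith⟩ with hfb
    have hfb_apply : ∀ x, fb x = min 1 (max 0 ((m + δ - U x) * (2/δ))) := fun x => rfl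
    have hfeq1 : ∀ x, U x ≤ m + δ/2 → fb x = 1 := by
      intro x hx
      rw [hfb_apply]
      apply min_eq_left
      apply le_max_of_le_right
      have h2δ : (0:ℝ) < 2/δ := by positivity
      have h3 : (δ/2) * (2/δ) ≤ (m + δ - U x) * (2/δ) :=
        mul_le_mul_of_nonneg_right (by linarith) h2δ.le
      have h4 : (δ/2) * (2/δ) = 1 := by field_simp
      linarith
    have hfeq0 : ∀ x, m + δ ≤ U x → fb x = 0 := by
      intro x hx
      rw [hfb_apply]
      rw [max_eq_left (mul_nonpos_of_nonpos_of_nonneg (by linarith) (by positivity))]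
      exact min_eq_right zero_le_one
    -- lower bound sequence
    set F : Set (EuclideanSpace ℝ (Fin d)) := {x | U x ≤ m + δ/2} with hF
    have hFmeas : MeasurableSet F := (isClosed_le hUc continuous_const).measurableSet
    have hFc : Fᶜ = {x | m + δ/2 < U x} := by
      ext x; simp [hF, not_le]
    have htail : Tendsto (fun n => gibbs d U (ε n) Fᶜ) atTop (𝓝 0) := by
      rw [hFc]
      exact gibbs_tail_tendsto hUc hx₀ (hεpos n₀) hn₀ hεpos hε0 (half_pos hδ)
    have htailR : Tendsto (fun n => (gibbs d U (ε n) Fᶜ).toReal) atTop (𝓝 0) := by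
      have := (ENNReal.tendsto_toReal (by simp : (0:ℝ≥0∞) ≠ ⊤)).comp htail
      simpa [Function.comp_def] using this
    have hL : Tendsto (fun n => 1 - (gibbs d U (ε n) Fᶜ).toReal) atTop (𝓝 1) := by
      have h5 : Tendsto (fun n => 1 - (gibbs d U (ε n) Fᶜ).toReal) atTop (𝓝 (1 - 0)) :=
        Tendsto.sub tendsto_const_nhds htailR
      simpa using h5
    have hle : ∀ᶠ n in atTop,
        1 - (gibbs d U (ε n) Fᶜ).toReal ≤ ∫ x, fb x ∂(gibbs d U (ε n)) := by
      filter_upwards [hZfin] with n hZn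
      haveI := gibbs_isProb hUc (ε n) hZn
      have hsum : (gibbs d U (ε n) F).toReal + (gibbs d U (ε n) Fᶜ).toReal = 1 := by
        rw [← ENNReal.toReal_add (measure_ne_top _ _) (measure_ne_top _ _),
          measure_add_measure_compl hFmeas]
        simp
      have hind : (gibbs d U (ε n) F).toReal =
          ∫ x, F.indicator (fun _ => (1:ℝ)) x ∂(gibbs d U (ε n)) := by
        rw [integral_indicator_const _ hFmeas]
        simp [measureReal_def]
      have hmono : (∫ x, F.indicator (fun _ => (1:ℝ)) x ∂(gibbs d U (ε n))) ≤
          ∫ x, fb x ∂(gibbs d U (ε n)) := by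
        apply integral_mono ((integrable_const (1:ℝ)).indicator hFmeas)
          (fb.integrable _)
        intro x
        by_cases hx : x ∈ F
        · rw [Set.indicator_of_mem hx]
          exact (hfeq1 x hx).ge
        · rw [Set.indicator_of_notMem hx]
          exact hf0 x
      linarith [hind ▸ hmono]
    have hint1 : (1:ℝ) ≤ ∫ x, fb x ∂μ := le_of_tendsto_of_tendsto hL (hweak fb) hle
    have hintle : (∫ x, fb x ∂μ) ≤ 1 := by
      calc (∫ x, fb x ∂μ) ≤ ∫ _, (1:ℝ) ∂μ :=
        integral_mono (fb.integrable μ) (integrable_const 1) hf1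
      _ = 1 := by simp
    have hint : (∫ x, fb x ∂μ) = 1 := le_antisymm hintle hint1
    have hzero : (∫ x, (1 - fb x) ∂μ) = 0 := by
      rw [integral_sub (integrable_const 1) (fb.integrable μ), hint]
      simp
    have hae : (fun x => 1 - fb x) =ᵐ[μ] 0 :=
      (integral_eq_zero_iff_of_nonneg (fun x => sub_nonneg.2 (hf1 x))
        ((integrable_const 1).sub (fb.integrable μ))).1 hzero
    have hnull : μ {x | ¬ (1 - fb x = 0)} = 0 := by
      have := hae
      rw [Filter.EventuallyEq, ae_iff] at this
      simpa using this
    apply measure_mono_null _ hnull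
    intro x hx
    simp only [Set.mem_setOf_eq] at hx ⊢
    rw [hfeq0 x hx.le]
    norm_num
  -- assemble
  have hset : {x : EuclideanSpace ℝ (Fin d) | ∀ y, U x ≤ U y} = U ⁻¹' Set.Iic m :=
    Set.ext fun x => ⟨fun h => h x₀, fun h y => le_trans h (hx₀ y)⟩
  rw [hset, ← prob_compl_eq_zero_iff (hUc.measurable measurableSet_Iic)]
  have hUn : μ (⋃ k : ℕ, {x | m + 1/(k+1) < U x}) = 0 :=
    measure_iUnion_null fun k => key _ (by positivity)
  apply measure_mono_null _ hUn
  intro x hx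
  simp only [Set.mem_compl_iff, Set.mem_preimage, Set.mem_Iic, not_le] at hx
  obtain ⟨k, hk⟩ := exists_nat_one_div_lt (sub_pos.2 hx)
  exact Set.mem_iUnion.2 ⟨k, by simp only [Set.mem_setOf_eq]; push_cast; linarith⟩
end

section
/- Let U : ℝ^d → ℝ be continuous, convex, and coercive, and let m = inf_{x ∈ ℝ^d} U(x). Then for every δ > 0, the Gibbs measure of the set where U exceeds its minimum by at least δ vanishes in the small-temperature limit: μ_ε({x : U(x) ≥ m + δ}) → 0 as ε → 0. -/
open MeasureTheory Filter

lemma integrable_exp_neg_abs' {b : ℝ} (hb : 0 < b) :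
    Integrable (fun t : ℝ => Real.exp (-(b * |t|))) := by
  have hIoi : IntegrableOn (fun t : ℝ => Real.exp (-(b * |t|))) (Set.Ioi 0) := by
    refine (exp_neg_integrableOn_Ioi 0 hb).congr_fun (fun t ht => ?_) measurableSet_Ioi
    simp only [abs_of_pos (Set.mem_Ioi.mp ht), neg_mul]
  have hIic : IntegrableOn (fun t : ℝ => Real.exp (-(b * |t|))) (Set.Iic 0) := by
    rw [← Measure.map_neg_eq_self (volume : Measure ℝ)]
    have m : MeasurableEmbedding fun x : ℝ => -x := (Homeomorph.neg ℝ).measurableEmbedding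
    rw [m.integrableOn_map_iff]
    simp_rw [Function.comp_def, abs_neg, Set.neg_preimage, Set.neg_Iic, neg_zero]
    exact Iff.mpr integrableOn_Ici_iff_integrableOn_Ioi hIoi
  have := hIic.union hIoi
  rwa [Set.Iic_union_Ioi, integrableOn_univ] at this

lemma abs_coord_le_norm{d : ℕ} (x : EuclideanSpace ℝ (Fin d)) (i : Fin d) : |x i| ≤ ‖x‖ := by
  rw [EuclideanSpace.norm_eq, ← Real.sqrt_sq_eq_abs]
  apply Real.sqrt_le_sqrt
  have : |x i| ^ 2 ≤ ∑ j, |x j| ^ 2 :=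
    Finset.single_le_sum (f := fun j => |x j| ^ 2) (fun j _ => by positivity) (Finset.mem_univ i)
  simpa [sq_abs] using this

lemma integrable_exp_neg_mul_norm' (d : ℕ) {b : ℝ} (hb : 0 < b) :
    Integrable (fun x : EuclideanSpace ℝ (Fin d) => Real.exp (-(b * ‖x‖))) := by
  set c : ℝ := b / (d + 1) with hc
  have hc0 : 0 < c := by positivity
  have hG : Integrable (fun y : Fin d → ℝ => ∏ i, Real.exp (-(c * |y i|))) :=
    Integrable.fintype_prod (fun _ => integrable_exp_neg_abs' hc0)
  have hprod : Integrable (fun x : EuclideanSpace ℝ (Fin d) =>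
      ∏ i, Real.exp (-(c * |x i|))) := by
    have := ((EuclideanSpace.volume_preserving_symm_measurableEquiv_toLp (Fin d)).integrable_comp_emb
      (MeasurableEquiv.toLp 2 (Fin d → ℝ)).symm.measurableEmbedding
      (g := fun y : Fin d → ℝ => ∏ i, Real.exp (-(c * |y i|)))).mpr hG
    exact this
  refine hprod.mono ?_ ?_
  · exact (Real.continuous_exp.comp ((continuous_norm.const_smul b).neg)).aestronglyMeasurable
  · refine Filter.Eventually.of_forall (fun x => ?_)
    rw [Real.norm_eq_abs, abs_of_pos (Real.exp_pos _), ← Real.exp_sum, Real.norm_eq_abs,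
      abs_of_pos (Real.exp_pos _)]
    apply Real.exp_le_exp.mpr
    have h1 : ∑ i, |x i| ≤ (d : ℝ) * ‖x‖ := by
      calc ∑ i, |x i| ≤ ∑ _i : Fin d, ‖x‖ := Finset.sum_le_sum fun i _ => abs_coord_le_norm x i
      _ = (d : ℝ) * ‖x‖ := by simp [Finset.sum_const, nsmul_eq_mul]
    have h3 : c * ∑ i, |x i| ≤ b * ‖x‖ := by
      calc c * ∑ i, |x i| ≤ c * ((d : ℝ) * ‖x‖) := mul_le_mul_of_nonneg_left h1 hc0.le
      _ ≤ b * ‖x‖ := by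
          rw [← mul_assoc]
          apply mul_le_mul_of_nonneg_right _ (norm_nonneg x)
          rw [hc, div_mul_eq_mul_div, div_le_iff₀ (by positivity)]
          nlinarith [hb.le, Nat.cast_nonneg (α := ℝ) d]
    have h2 : ∑ i, -(c * |x i|) = -(c * ∑ i, |x i|) := by
      rw [Finset.mul_sum]; exact Finset.sum_neg_distrib _
    rw [h2]
    exact neg_le_neg h3

/-- For `U : ℝ^d → ℝ` continuous, convex and coercive, with `m = inf U`,
the Gibbs mass of `{x : U x ≥ m + δ}` vanishes as `ε → 0⁺`, for every `δ > 0`. -/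
theorem gibbs_measure_above_min_tendsto_zero
    (d : ℕ) (U : EuclideanSpace ℝ (Fin d) → ℝ)
    (hUc : Continuous U) (hUconv : ConvexOn ℝ Set.univ U)
    (hUcoer : Filter.Tendsto U (Bornology.cobounded (EuclideanSpace ℝ (Fin d))) Filter.atTop)
    (δ : ℝ) (hδ : 0 < δ) :
    Filter.Tendsto
      (fun ε => gibbs d U ε {x : EuclideanSpace ℝ (Fin d) | (⨅ y, U y) + δ ≤ U x})
      (nhdsWithin 0 (Set.Ioi 0)) (nhds 0) := by
  have hcob : Tendsto U (Filter.cocompact (EuclideanSpace ℝ (Fin d))) atTop := by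
    rwa [← Metric.cobounded_eq_cocompact]
  obtain ⟨x0, hx0⟩ := hUc.exists_forall_le hcob
  set m : ℝ := U x0 with hm
  have hiInf : (⨅ y, U y) = m :=
    le_antisymm (ciInf_le ⟨m, Set.forall_mem_range.2 hx0⟩ x0) (le_ciInf hx0)
  -- the "bad" set
  set A : Set (EuclideanSpace ℝ (Fin d)) := {x | m + δ ≤ U x} with hA
  have hAmeas : MeasurableSet A := (isClosed_le (by continuity) hUc).measurableSet
  simp only [hiInf, ← hA]
  -- a radius R beyond which U ≥ m + 1
  obtain ⟨R, hR0, hRbig⟩ : ∃ R : ℝ, 0 < R ∧ ∀ x, R ≤ ‖x - x0‖ → m + 1 ≤ U x := by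
    obtain ⟨K, hKc, hK⟩ := Filter.mem_cocompact.mp (hcob.eventually (eventually_ge_atTop (m + 1)))
    obtain ⟨r, hr0, hrK⟩ := hKc.isBounded.subset_closedBall_lt 0 x0
    refine ⟨r + 1, by linarith, fun x hx => hK ?_⟩
    intro hxK
    have := hrK hxK
    rw [Metric.mem_closedBall, dist_eq_norm] at this
    linarith
  -- linear growth
  have hgrow : ∀ x, m - 1 + ‖x - x0‖ / R ≤ U x := by
    intro x
    rcases le_or_gt ‖x - x0‖ R with hle | hlt
    · have h1 : ‖x - x0‖ / R ≤ 1 := div_le_one_of_le₀ hle hR0.le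
      have := hx0 x
      linarith
    · set n : ℝ := ‖x - x0‖ with hn
      have hn0 : 0 < n := hR0.trans hlt
      set t : ℝ := R / n with ht
      have ht0 : 0 < t := div_pos hR0 hn0
      have ht1 : t ≤ 1 := (div_le_one hn0).mpr hlt.le
      have htn : t * n = R := by rw [ht]; exact div_mul_cancel₀ R hn0.ne'
      have hyid : (1 - t) • x0 + t • x = x0 + t • (x - x0) := by module
      have hynorm : R ≤ ‖(x0 + t • (x - x0)) - x0‖ := by
        rw [add_sub_cancel_left, norm_smul, Real.norm_eq_abs, abs_of_pos ht0, ← hn, htn]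
      have hconv := hUconv.2 (Set.mem_univ x0) (Set.mem_univ x)
        (by linarith : (0:ℝ) ≤ 1 - t) ht0.le (by ring)
      rw [hyid] at hconv
      simp only [smul_eq_mul, ← hm] at hconv
      have hy := hRbig _ hynorm
      have key : m + 1 ≤ (1 - t) * m + t * U x := hy.trans hconv
      have h5 : 1 ≤ t * (U x - m) := by nlinarith [key]
      have h6 : n / R ≤ U x - m := by
        rw [div_le_iff₀ hR0]
        nlinarith [h5, htn, hn0]
      linarith
  have hgrow' : ∀ x, (m - 1 - ‖x0‖ / R) + (1 / R) * ‖x‖ ≤ U x := by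
    intro x
    have h1 := hgrow x
    have h2 : ‖x‖ - ‖x0‖ ≤ ‖x - x0‖ := norm_sub_norm_le x x0
    have h3 : (‖x‖ - ‖x0‖) / R ≤ ‖x - x0‖ / R := by gcongr
    rw [sub_div] at h3
    have h4 : 1 / R * ‖x‖ = ‖x‖ / R := by ring
    linarith
  -- integrability of the reference function
  have hInt : Integrable (fun x : EuclideanSpace ℝ (Fin d) => Real.exp (-(U x - m - δ))) := by
    have hr0 : (0:ℝ) < 1 / R := by positivity
    have hg := (integrable_exp_neg_mul_norm' d hr0).const_mul
      (Real.exp (m + δ - (m - 1 - ‖x0‖ / R)))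
    refine hg.mono ?_ (Filter.Eventually.of_forall fun x => ?_)
    · exact (Real.continuous_exp.comp
        (((hUc.sub continuous_const).sub continuous_const).neg)).aestronglyMeasurable
    · rw [Real.norm_eq_abs, Real.norm_eq_abs, ← Real.exp_add, abs_of_pos (Real.exp_pos _),
        abs_of_pos (Real.exp_pos _)]
      apply Real.exp_le_exp.mpr
      have := hgrow' x
      linarith
  set C : ENNReal := ∫⁻ x, ENNReal.ofReal (Real.exp (-(U x - m - δ))) with hC
  have hCtop : C ≠ ⊤ := hInt.lintegral_lt_top.ne
  -- positive-volume set where U is close to min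
  set S : Set (EuclideanSpace ℝ (Fin d)) := {x | U x < m + δ / 2} ∩ Metric.ball x0 1 with hS
  have hSopen : IsOpen S := ((isOpen_lt hUc continuous_const).inter Metric.isOpen_ball)
  have hx0S : x0 ∈ S := ⟨by simp only [Set.mem_setOf_eq]; linarith, Metric.mem_ball_self one_pos⟩
  set V : ENNReal := volume S with hV
  have hV0 : V ≠ 0 := (hSopen.measure_pos volume ⟨x0, hx0S⟩).ne'
  have hVtop : V ≠ ⊤ :=
    ((measure_mono Set.inter_subset_right).trans_lt measure_ball_lt_top).ne
  -- the denominator lower bound, for every ε > 0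
  have hZ : ∀ ε : ℝ, 0 < ε →
      ENNReal.ofReal (Real.exp (-(m + δ / 2) / ε ^ 2)) * V ≤
        ∫⁻ x, ENNReal.ofReal (Real.exp (-U x / ε ^ 2)) := by
    intro ε hε
    have hmeas : Measurable fun x : EuclideanSpace ℝ (Fin d) =>
        ENNReal.ofReal (Real.exp (-U x / ε ^ 2)) :=
      ENNReal.measurable_ofReal.comp (Real.measurable_exp.comp
        (hUc.measurable.neg.div_const _))
    calc ENNReal.ofReal (Real.exp (-(m + δ / 2) / ε ^ 2)) * V
        = ∫⁻ _x in S, ENNReal.ofReal (Real.exp (-(m + δ / 2) / ε ^ 2)) :=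
          (setLIntegral_const S _).symm
      _ ≤ ∫⁻ x in S, ENNReal.ofReal (Real.exp (-U x / ε ^ 2)) := by
          refine setLIntegral_mono hmeas fun x hx => ?_
          have hxS : U x < m + δ / 2 := hx.1
          have hε2 : (0:ℝ) < ε ^ 2 := by positivity
          apply ENNReal.ofReal_le_ofReal
          apply Real.exp_le_exp.mpr
          gcongr
      _ ≤ ∫⁻ x, ENNReal.ofReal (Real.exp (-U x / ε ^ 2)) := setLIntegral_le_lintegral S _
  -- the numerator upper bound, for 0 < ε ≤ 1
  have hN : ∀ ε : ℝ, 0 < ε → ε ≤ 1 →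
      (∫⁻ x in A, ENNReal.ofReal (Real.exp (-U x / ε ^ 2))) ≤
        ENNReal.ofReal (Real.exp (-(m + δ) / ε ^ 2)) * C := by
    intro ε hε0 hε1
    have hε2 : (0:ℝ) < ε ^ 2 := by positivity
    have hmeas2 : Measurable fun x : EuclideanSpace ℝ (Fin d) =>
        ENNReal.ofReal (Real.exp (-(U x - m - δ))) :=
      ENNReal.measurable_ofReal.comp (Real.measurable_exp.comp
        (((hUc.measurable.sub measurable_const).sub measurable_const).neg))
    calc (∫⁻ x in A, ENNReal.ofReal (Real.exp (-U x / ε ^ 2)))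
        ≤ ∫⁻ x in A, ENNReal.ofReal (Real.exp (-(m + δ) / ε ^ 2)) *
            ENNReal.ofReal (Real.exp (-(U x - m - δ))) := by
          refine setLIntegral_mono (measurable_const.mul hmeas2) fun x hx => ?_
          rw [← ENNReal.ofReal_mul (Real.exp_pos _).le, ← Real.exp_add]
          apply ENNReal.ofReal_le_ofReal
          apply Real.exp_le_exp.mpr
          have hx' : m + δ ≤ U x := hx
          have h12 : 1 ≤ 1 / ε ^ 2 := by
            rw [le_div_iff₀ hε2]; nlinarith
          have hkey : (U x - m - δ) * 1 ≤ (U x - m - δ) * (1 / ε ^ 2) :=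
            mul_le_mul_of_nonneg_left h12 (by linarith)
          have hring : -U x / ε ^ 2 =
              -(m + δ) / ε ^ 2 - (U x - m - δ) * (1 / ε ^ 2) := by ring
          rw [hring]
          linarith
      _ = ENNReal.ofReal (Real.exp (-(m + δ) / ε ^ 2)) *
            ∫⁻ x in A, ENNReal.ofReal (Real.exp (-(U x - m - δ))) :=
          lintegral_const_mul _ hmeas2
      _ ≤ ENNReal.ofReal (Real.exp (-(m + δ) / ε ^ 2)) * C :=
          mul_le_mul_right (setLIntegral_le_lintegral A _) _
  -- the final bound
  have hbound : ∀ ε : ℝ, 0 < ε → ε ≤ 1 →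
      gibbs d U ε A ≤ V⁻¹ * C * ENNReal.ofReal (Real.exp (-(δ / 2 * (ε ^ 2)⁻¹))) := by
    intro ε hε0 hε1
    have hZε := hZ ε hε0
    have hNε := hN ε hε0 hε1
    have e1pos : (0:ℝ) < Real.exp (-(m + δ / 2) / ε ^ 2) := Real.exp_pos _
    have hgibbs : gibbs d U ε A = (∫⁻ x, ENNReal.ofReal (Real.exp (-U x / ε ^ 2)))⁻¹ *
        ∫⁻ x in A, ENNReal.ofReal (Real.exp (-U x / ε ^ 2)) := by
      rw [gibbs, Measure.smul_apply, smul_eq_mul, withDensity_apply _ hAmeas]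
    rw [hgibbs]
    have step1 : (∫⁻ x, ENNReal.ofReal (Real.exp (-U x / ε ^ 2)))⁻¹ *
          (∫⁻ x in A, ENNReal.ofReal (Real.exp (-U x / ε ^ 2))) ≤
        (ENNReal.ofReal (Real.exp (-(m + δ / 2) / ε ^ 2)) * V)⁻¹ *
          (ENNReal.ofReal (Real.exp (-(m + δ) / ε ^ 2)) * C) :=
      mul_le_mul' (ENNReal.inv_le_inv' hZε) hNε
    refine step1.trans (le_of_eq ?_)
    have hne0 : ENNReal.ofReal (Real.exp (-(m + δ / 2) / ε ^ 2)) ≠ 0 :=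
      (ENNReal.ofReal_pos.mpr e1pos).ne'
    rw [ENNReal.mul_inv (Or.inl hne0) (Or.inl ENNReal.ofReal_ne_top),
      ← ENNReal.ofReal_inv_of_pos e1pos, ← Real.exp_neg]
    rw [show (-(δ / 2 * (ε ^ 2)⁻¹)) = (-(-(m + δ / 2) / ε ^ 2)) + (-(m + δ) / ε ^ 2) by ring,
      Real.exp_add, ENNReal.ofReal_mul (Real.exp_pos _).le]
    ring
  -- the bound tends to zero
  have hlim : Tendsto (fun ε : ℝ => V⁻¹ * C * ENNReal.ofReal (Real.exp (-(δ / 2 * (ε ^ 2)⁻¹))))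
      (nhdsWithin 0 (Set.Ioi 0)) (nhds 0) := by
    have h2 : Tendsto (fun ε : ℝ => ε ^ 2) (nhdsWithin 0 (Set.Ioi 0))
        (nhdsWithin 0 (Set.Ioi 0)) := by
      apply tendsto_nhdsWithin_of_tendsto_nhds_of_eventually_within
      · have := ((continuous_pow 2).tendsto (0:ℝ)).mono_left
          (nhdsWithin_le_nhds (s := Set.Ioi (0:ℝ)))
        simpa using this
      · filter_upwards [self_mem_nhdsWithin] with ε hε
        exact pow_pos (Set.mem_Ioi.mp hε) 2
    have h3 : Tendsto (fun ε : ℝ => (ε ^ 2)⁻¹) (nhdsWithin 0 (Set.Ioi 0)) atTop :=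
      tendsto_inv_nhdsGT_zero.comp h2
    have h4 : Tendsto (fun ε : ℝ => δ / 2 * (ε ^ 2)⁻¹) (nhdsWithin 0 (Set.Ioi 0)) atTop :=
      h3.const_mul_atTop (by positivity)
    have h5 : Tendsto (fun ε : ℝ => -(δ / 2 * (ε ^ 2)⁻¹)) (nhdsWithin 0 (Set.Ioi 0)) atBot :=
      tendsto_neg_atTop_atBot.comp h4
    have h6 : Tendsto (fun ε : ℝ => Real.exp (-(δ / 2 * (ε ^ 2)⁻¹)))
        (nhdsWithin 0 (Set.Ioi 0)) (nhds 0) := Real.tendsto_exp_atBot.comp h5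
    have h7 : Tendsto (fun ε : ℝ => ENNReal.ofReal (Real.exp (-(δ / 2 * (ε ^ 2)⁻¹))))
        (nhdsWithin 0 (Set.Ioi 0)) (nhds 0) := by
      have := (ENNReal.continuous_ofReal.tendsto 0).comp h6
      simpa [Function.comp_def] using this
    have h8 := ENNReal.Tendsto.const_mul h7
      (Or.inr (ENNReal.mul_ne_top (ENNReal.inv_ne_top.mpr hV0) hCtop))
    simpa using h8
  -- squeeze
  refine tendsto_of_tendsto_of_tendsto_of_le_of_le' tendsto_const_nhds hlim
    (Filter.Eventually.of_forall fun ε => zero_le) ?_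
  have h1 : ∀ᶠ ε in nhdsWithin (0:ℝ) (Set.Ioi 0), ε ≤ 1 :=
    eventually_nhdsWithin_of_eventually_nhds
      ((eventually_lt_nhds zero_lt_one).mono fun x h => h.le)
  filter_upwards [h1, self_mem_nhdsWithin] with ε hε1 hε0
  exact hbound ε hε0 hε1
end
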